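/- Let ω ∈ ℝ³ and let ρ̂ : ℝ³ → ℝ be a radial Schwartz-class function, ρ̂(k) = ρ_r(|k|). Define B̂_ω(k) = ρ_r'(r)((k·ω)k − r²ω)/r³ with r = |k|, and let ê : ℝ³ → ℂ³ be square-integrable with k · ê(k) = 0 a.e. Then ω · ∫ [ê(k)(∇_k · B̂_ω(k)) − (ê(k) · ∇_k)B̂_ω(k)] dk = 0, because the integrand contracted with ω equals ê(k) · (k β(k)) for a scalar function β, and ê ⊥ k pointwise. -/

import Mathlib

open MeasureTheory Matrix

/-- Euclidean norm on `Fin 3 → ℝ`. -/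
noncomputable def enorm3 (k : Fin 3 → ℝ) : ℝ := Real.sqrt (∑ i, k i ^ 2)

/-- Divergence of a vector field on ℝ³. -/
noncomputable def div3 (F : (Fin 3 → ℝ) → (Fin 3 → ℝ)) (k : Fin 3 → ℝ) : ℝ :=
  ∑ j, fderiv ℝ (fun y => F y j) k (Pi.single j 1)

lemma stmt6_aux (ω : Fin 3 → ℝ)
    (ρhat : SchwartzMap (Fin 3 → ℝ) ℝ) (ρr : ℝ → ℝ)
    (hrad : ∀ k, ρhat k = ρr (enorm3 k))
    (B : (Fin 3 → ℝ) → (Fin 3 → ℝ))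
    (hB : ∀ k, B k = (deriv ρr (enorm3 k) / (enorm3 k) ^ 3) •
        ((k ⬝ᵥ ω) • k - ((enorm3 k) ^ 2) • ω))
    (k : Fin 3 → ℝ) (hk : k ≠ 0) :
    ∃ H H' : ℝ, ∀ i j : Fin 3,
      fderiv ℝ (fun y => B y i) k (Pi.single j 1) =
        H * ((∑ m, k m * ω m) * (Pi.single j 1 : Fin 3 → ℝ) i + k i * ω j - ω i * (2 * k j))
        + ((∑ m, k m * ω m) * k i - (∑ m, k m ^ 2) * ω i) * (H' * (2 * k j)) := by
  classical
  have hq_cont : Continuous (fun y : Fin 3 → ℝ => ∑ m, y m ^ 2) := by fun_prop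
  have hqpos : 0 < ∑ m, k m ^ 2 := by
    have hm : ∃ m, k m ≠ 0 := by
      by_contra h
      push_neg at h
      exact hk (funext fun m => h m)
    obtain ⟨m, hm⟩ := hm
    exact Finset.sum_pos' (fun _ _ => sq_nonneg _)
      ⟨m, Finset.mem_univ m, by positivity⟩
  set ψ : ℝ → ℝ := fun r => ρhat (r • (Pi.single 0 1 : Fin 3 → ℝ)) with hψdef
  have hψ : ContDiff ℝ (↑(⊤ : ℕ∞)) ψ :=
    (ρhat.smooth ⊤).comp
      (contDiff_id.smul (contDiff_const (c := (Pi.single 0 1 : Fin 3 → ℝ))))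
  have henorm : ∀ r : ℝ, 0 ≤ r → enorm3 (r • (Pi.single 0 1 : Fin 3 → ℝ)) = r := by
    intro r hr
    have h1 : ∑ i, (r • (Pi.single 0 1 : Fin 3 → ℝ)) i ^ 2 = r ^ 2 := by
      simp [Fin.sum_univ_three, Pi.single_apply]
    rw [enorm3, h1, Real.sqrt_sq hr]
  have hρψ : ∀ r : ℝ, 0 < r → ρr r = ψ r := by
    intro r hr
    rw [hψdef]
    simp only
    rw [hrad, henorm r hr.le]
  have hd : ∀ r : ℝ, 0 < r → deriv ρr r = deriv ψ r := by
    intro r hr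
    apply Filter.EventuallyEq.deriv_eq
    filter_upwards [Ioi_mem_nhds hr] with t ht
    exact hρψ t ht
  have hφ : Differentiable ℝ (deriv ψ) :=
    ((contDiff_infty_iff_deriv.mp hψ).2).differentiable (by simp)
  -- the smooth extension of the radial factor, as a function of q = r²
  set Hf : ℝ → ℝ := fun t => deriv ψ (Real.sqrt t) / Real.sqrt t ^ 3 with hHfdef
  have hBG : ∀ᶠ y in nhds k, ∀ i, B y i =
      Hf (∑ m, y m ^ 2) * ((∑ m, y m * ω m) * y i - (∑ m, y m ^ 2) * ω i) := by
    have hmem : {y : Fin 3 → ℝ | 0 < ∑ m, y m ^ 2} ∈ nhds k :=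
      (isOpen_lt continuous_const hq_cont).mem_nhds hqpos
    filter_upwards [hmem] with y hy i
    have hny : enorm3 y = Real.sqrt (∑ m, y m ^ 2) := rfl
    have hsq : enorm3 y ^ 2 = ∑ m, y m ^ 2 := by rw [hny]; exact Real.sq_sqrt hy.le
    have hspos : 0 < enorm3 y := by rw [hny]; exact Real.sqrt_pos.mpr hy
    have hdot : y ⬝ᵥ ω = ∑ m, y m * ω m := rfl
    rw [hB y]
    simp only [Pi.smul_apply, Pi.sub_apply, smul_eq_mul]
    rw [hd _ hspos, hsq, hdot, hHfdef]
    simp only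
    rw [← hny]
  have hfd : ∀ i, fderiv ℝ (fun y => B y i) k =
      fderiv ℝ (fun y => Hf (∑ m, y m ^ 2) *
        ((∑ m, y m * ω m) * y i - (∑ m, y m ^ 2) * ω i)) k := by
    intro i
    apply Filter.EventuallyEq.fderiv_eq
    filter_upwards [hBG] with y hy
    exact hy i
  have hsqrt : DifferentiableAt ℝ Real.sqrt (∑ m, k m ^ 2) :=
    (Real.hasDerivAt_sqrt hqpos.ne').differentiableAt
  have hHdiff : DifferentiableAt ℝ Hf (∑ m, k m ^ 2) := by
    apply DifferentiableAt.div
    · exact DifferentiableAt.comp _ (hφ (Real.sqrt (∑ m, k m ^ 2))) hsqrt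
    · exact hsqrt.pow 3
    · exact (pow_pos (Real.sqrt_pos.mpr hqpos) 3).ne'
  have hH : HasDerivAt Hf (deriv Hf (∑ m, k m ^ 2)) (∑ m, k m ^ 2) := hHdiff.hasDerivAt
  have hproj : ∀ m : Fin 3,
      HasFDerivAt (fun y : Fin 3 → ℝ => y m)
        (ContinuousLinearMap.proj m : (Fin 3 → ℝ) →L[ℝ] ℝ) k :=
    fun m => ((ContinuousLinearMap.proj m : (Fin 3 → ℝ) →L[ℝ] ℝ)).hasFDerivAt
  have hqF : HasFDerivAt (fun y : Fin 3 → ℝ => ∑ m, y m ^ 2)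
      (∑ m, (2 * k m) • (ContinuousLinearMap.proj m : (Fin 3 → ℝ) →L[ℝ] ℝ)) k := by
    apply HasFDerivAt.fun_sum
    intro m _
    have h2 := (hproj m).fun_mul (hproj m)
    have heq : (2 * k m) • (ContinuousLinearMap.proj m : (Fin 3 → ℝ) →L[ℝ] ℝ)
        = k m • ContinuousLinearMap.proj m + k m • ContinuousLinearMap.proj m := by
      rw [two_mul, add_smul]
    rw [heq]
    simpa [pow_two] using h2
  have hsF : HasFDerivAt (fun y : Fin 3 → ℝ => ∑ m, y m * ω m)
      (∑ m, ω m • (ContinuousLinearMap.proj m : (Fin 3 → ℝ) →L[ℝ] ℝ)) k :=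
    HasFDerivAt.fun_sum fun m _ => (hproj m).mul_const (ω m)
  refine ⟨Hf (∑ m, k m ^ 2), deriv Hf (∑ m, k m ^ 2), fun i j => ?_⟩
  have hinner := (hsF.mul (hproj i)).sub (hqF.mul_const (ω i))
  have hcomp := hH.comp_hasFDerivAt k hqF
  have hGi : HasFDerivAt
      (fun y => Hf (∑ m, y m ^ 2) * ((∑ m, y m * ω m) * y i - (∑ m, y m ^ 2) * ω i))
      (Hf (∑ m, k m ^ 2) •
        (((∑ m, k m * ω m) • (ContinuousLinearMap.proj i : (Fin 3 → ℝ) →L[ℝ] ℝ)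
            + k i • ∑ m, ω m • (ContinuousLinearMap.proj m : (Fin 3 → ℝ) →L[ℝ] ℝ))
          - ω i • ∑ m, (2 * k m) • (ContinuousLinearMap.proj m : (Fin 3 → ℝ) →L[ℝ] ℝ))
        + ((∑ m, k m * ω m) * k i - (∑ m, k m ^ 2) * ω i) •
          (deriv Hf (∑ m, k m ^ 2) •
            ∑ m, (2 * k m) • (ContinuousLinearMap.proj m : (Fin 3 → ℝ) →L[ℝ] ℝ))) k :=
    hcomp.mul hinner
  rw [hfd i, hGi.fderiv]
  simp only [ContinuousLinearMap.add_apply, ContinuousLinearMap.coe_sub',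
    Pi.sub_apply, ContinuousLinearMap.smul_apply, ContinuousLinearMap.sum_apply,
    ContinuousLinearMap.proj_apply, smul_eq_mul]
  have hev : ∀ c : Fin 3 → ℝ, ∑ m, c m * (Pi.single j 1 : Fin 3 → ℝ) m = c j := by
    intro c
    simp [Pi.single_apply]
  rw [hev fun m => 2 * k m, hev ω]

theorem stmt6 (ω : Fin 3 → ℝ)
    (ρhat : SchwartzMap (Fin 3 → ℝ) ℝ) (ρr : ℝ → ℝ)
    (hrad : ∀ k, ρhat k = ρr (enorm3 k))
    (B : (Fin 3 → ℝ) → (Fin 3 → ℝ))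
    (hB : ∀ k, B k = (deriv ρr (enorm3 k) / (enorm3 k) ^ 3) •
        ((k ⬝ᵥ ω) • k - ((enorm3 k) ^ 2) • ω))
    (ehat : (Fin 3 → ℝ) → (Fin 3 → ℂ))
    (he2 : MemLp ehat 2 (volume : Measure (Fin 3 → ℝ)))
    (hdiv : ∀ᵐ k : Fin 3 → ℝ, (fun i => (k i : ℂ)) ⬝ᵥ ehat k = 0)
    (hint : Integrable (fun k => (fun i =>
        ehat k i * (div3 B k : ℂ) -
        ∑ j, ehat k j * (fderiv ℝ (fun y => B y i) k (Pi.single j 1) : ℂ) : Fin 3 → ℂ))) :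
    (fun i => (ω i : ℂ)) ⬝ᵥ
      (∫ k : Fin 3 → ℝ, (fun i =>
        ehat k i * (div3 B k : ℂ) -
        ∑ j, ehat k j * (fderiv ℝ (fun y => B y i) k (Pi.single j 1) : ℂ) : Fin 3 → ℂ)) = 0 := by
  classical
  set Fn : (Fin 3 → ℝ) → (Fin 3 → ℂ) := fun k => (fun i =>
      ehat k i * (div3 B k : ℂ) -
      ∑ j, ehat k j * (fderiv ℝ (fun y => B y i) k (Pi.single j 1) : ℂ)) with hFndef
  have h0 : ∀ᵐ k : Fin 3 → ℝ, k ≠ 0 := by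
    have hz : (volume : Measure (Fin 3 → ℝ)) {0} = 0 := measure_singleton 0
    rw [Filter.eventually_iff, mem_ae_iff]
    simpa using hz
  have key : ∀ᵐ k : Fin 3 → ℝ, ∑ i, (ω i : ℂ) * Fn k i = 0 := by
    filter_upwards [hdiv, h0] with k hdk hk0
    obtain ⟨H, H', hD⟩ := stmt6_aux ω ρhat ρr hrad B hB k hk0
    have hdk' : (k 0 : ℂ) * ehat k 0 + (k 1 : ℂ) * ehat k 1 + (k 2 : ℂ) * ehat k 2 = 0 := by
      simpa [dotProduct, Fin.sum_univ_three] using hdk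
    simp only [hFndef, div3, hD, Fin.sum_univ_three]
    norm_num [Pi.single_apply]
    push_cast
    linear_combination (2 * (H : ℂ) * ((ω 0 : ℂ)^2 + (ω 1 : ℂ)^2 + (ω 2 : ℂ)^2)
      - 2 * (H' : ℂ) * (((k 0 : ℂ) * (ω 0 : ℂ) + (k 1 : ℂ) * (ω 1 : ℂ) + (k 2 : ℂ) * (ω 2 : ℂ))^2
        - ((k 0 : ℂ)^2 + (k 1 : ℂ)^2 + (k 2 : ℂ)^2) * ((ω 0 : ℂ)^2 + (ω 1 : ℂ)^2 + (ω 2 : ℂ)^2)))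
      * hdk'
  have hFi : ∀ i, Integrable (fun k => Fn k i) volume := by
    intro i
    simpa using (ContinuousLinearMap.proj i : (Fin 3 → ℂ) →L[ℂ] ℂ).integrable_comp hint
  have hIc : ∀ i, (∫ k, Fn k) i = ∫ k, Fn k i := by
    intro i
    have := ((ContinuousLinearMap.proj i : (Fin 3 → ℂ) →L[ℂ] ℂ)).integral_comp_comm hint
    simpa using this.symm
  have hdotgoal : (fun i => (ω i : ℂ)) ⬝ᵥ (∫ k, Fn k) = ∑ i, (ω i : ℂ) * (∫ k, Fn k) i := rfl
  rw [hdotgoal]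
  calc ∑ i, (ω i : ℂ) * (∫ k, Fn k) i
      = ∑ i, ∫ k, (ω i : ℂ) * Fn k i := by
        refine Finset.sum_congr rfl fun i _ => ?_
        rw [hIc i, ← integral_const_mul]
    _ = ∫ k, ∑ i, (ω i : ℂ) * Fn k i := by
        rw [integral_finset_sum]
        exact fun i _ => (hFi i).const_mul _
    _ = 0 := by
        rw [integral_eq_zero_of_ae key]
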